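/- Let (X, d) be a complete locally compact metric space and φ : X → ℝ≥0 a continuous function. If for some x₀ ∈ X and r > 0 we have φ(x₀) ≥ 1/r², then for any A > 0 there exists a point x̄ ∈ closedBall(x₀, 2Ar) such that φ(x̄) ≥ 1/r² and for all z ∈ ball(x̄, A·φ(x̄)^(-1/2)) one has φ(z) ≤ 4·φ(x̄). -/

import Mathlib

/-- If `s^2 ≤ t` with `0 < s`, then `t ^ (-1/2) ≤ s⁻¹`. -/
lemma aux_rpow_neg_half {s t : ℝ} (hs : 0 < s) (h : s ^ 2 ≤ t) :
    t ^ (-(1:ℝ)/2) ≤ s⁻¹ := by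
  have ht : 0 < t := lt_of_lt_of_le (by positivity) h
  have hst : s ≤ t ^ ((1:ℝ)/2) := by
    have h1 : (s ^ 2 : ℝ) ^ ((1:ℝ)/2) ≤ t ^ ((1:ℝ)/2) :=
      Real.rpow_le_rpow (by positivity) h (by norm_num)
    have h2 : (s ^ 2 : ℝ) ^ ((1:ℝ)/2) = s := by
      rw [← Real.rpow_natCast s 2, ← Real.rpow_mul hs.le]
      norm_num
    linarith [h1, h2.symm ▸ h1]
  have : t ^ (-(1:ℝ)/2) = (t ^ ((1:ℝ)/2))⁻¹ := by
    rw [show (-(1:ℝ)/2) = -((1:ℝ)/2) by ring, Real.rpow_neg ht.le]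
  rw [this]
  exact inv_anti₀ hs hst

/-- Point selection lemma (1/4-almost maximum lemma). -/
theorem point_selection {X : Type*} [MetricSpace X] [ProperSpace X]
    (φ : X → ℝ) (hφc : Continuous φ) (hφ0 : ∀ x, 0 ≤ φ x)
    (x₀ : X) (r : ℝ) (hr : 0 < r) (h : φ x₀ ≥ 1 / r ^ 2)
    (A : ℝ) (hA : 0 < A) :
    ∃ x ∈ Metric.closedBall x₀ (2 * A * r),
      φ x ≥ 1 / r ^ 2 ∧
      ∀ z ∈ Metric.ball x (A * (φ x) ^ (-(1:ℝ)/2)), φ z ≤ 4 * φ x := by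
  by_contra hcon
  push_neg at hcon
  have key : ∀ n : ℕ, ∃ x : X,
      dist x x₀ ≤ 2 * A * r * (1 - (1/2 : ℝ)^n) ∧ 4^n / r^2 ≤ φ x := by
    intro n
    induction n with
    | zero =>
      refine ⟨x₀, ?_, ?_⟩
      · simp
      · simpa using h
    | succ n ih =>
      obtain ⟨x, hd, hφx⟩ := ih
      have hpow : (0:ℝ) < (1/2 : ℝ)^n := by positivity
      have hpow1 : ((1:ℝ)/2)^n ≤ 1 := pow_le_one₀ (by norm_num) (by norm_num)
      have hball : x ∈ Metric.closedBall x₀ (2 * A * r) := by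
        rw [Metric.mem_closedBall]
        nlinarith [mul_pos (mul_pos (by linarith : (0:ℝ) < 2*A) hr) hpow]
      have h4n : (1:ℝ) ≤ 4^n := one_le_pow₀ (by norm_num)
      have hx1 : φ x ≥ 1 / r^2 := by
        refine le_trans ?_ hφx
        apply div_le_div_of_nonneg_right ?_ (by positivity)
        · exact h4n
      obtain ⟨z, hz, hz4⟩ := hcon x hball hx1
      rw [Metric.mem_ball] at hz
      have hs : (0:ℝ) < 2^n / r := by positivity
      have hsq : (2^n / r)^2 ≤ φ x := by
        have : ((2:ℝ)^n / r)^2 = 4^n / r^2 := by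
          rw [div_pow]
          congr 1
          rw [← pow_mul, show (4:ℝ) = 2^2 by norm_num, ← pow_mul, mul_comm]
        linarith [this ▸ hφx]
      have hrpow : (φ x) ^ (-(1:ℝ)/2) ≤ (2^n / r)⁻¹ := aux_rpow_neg_half hs hsq
      have hinv : ((2:ℝ)^n / r)⁻¹ = r * (1/2)^n := by
        field_simp
        rw [← mul_pow]; norm_num
      have hdist : dist z x ≤ A * (r * (1/2)^n) := by
        calc dist z x ≤ A * (φ x) ^ (-(1:ℝ)/2) := le_of_lt hz
        _ ≤ A * ((2:ℝ)^n / r)⁻¹ := by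
            exact mul_le_mul_of_nonneg_left hrpow hA.le
        _ = A * (r * (1/2)^n) := by rw [hinv]
      refine ⟨z, ?_, ?_⟩
      · have htri := dist_triangle z x x₀
        have : ((1:ℝ)/2)^(n+1) = (1/2)^n / 2 := by ring
        rw [this]
        nlinarith [htri]
      · have : (4:ℝ)^(n+1) / r^2 = 4 * (4^n / r^2) := by ring
        rw [this]
        nlinarith [hφx]
  have hcompact : IsCompact (Metric.closedBall x₀ (2 * A * r)) :=
    isCompact_closedBall _ _
  have hne : (Metric.closedBall x₀ (2 * A * r)).Nonempty :=
    ⟨x₀, Metric.mem_closedBall.mpr (by simp; positivity)⟩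
  obtain ⟨m, hm, hM⟩ := hcompact.exists_isMaxOn hne hφc.continuousOn
  obtain ⟨n, hn⟩ := pow_unbounded_of_one_lt (φ m * r^2) (by norm_num : (1:ℝ) < 4)
  obtain ⟨x, hd, hφx⟩ := key n
  have hxball : x ∈ Metric.closedBall x₀ (2 * A * r) := by
    rw [Metric.mem_closedBall]
    have hpow : (0:ℝ) ≤ (1/2 : ℝ)^n := by positivity
    nlinarith [mul_pos (by linarith : (0:ℝ) < 2*A) hr]
  have hle : φ x ≤ φ m := hM hxball
  have : (4:ℝ)^n / r^2 ≤ φ m := le_trans hφx hle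
  have : (4:ℝ)^n ≤ φ m * r^2 := by
    rw [div_le_iff₀ (by positivity)] at this
    linarith
  linarith
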